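/- Suppose every node of a labeled graph is 1-color (its incident edges all carry the same single label, and every node is incident to at least one edge). Then for every prime p with p ≥ N there exists a storage code with source alphabet S = (Fin 2 → ZMod p) and coded alphabet T = ZMod p; in particular symbol rate 2 is achievable over such graphs. -/

import Mathlib

/-- A storage code problem over a labeled graph: `N` nodes, `K` sources, and a
symmetric labeling `t` of pairs of nodes by sources, with no self-loops. -/
structure LabeledGraph (N K : ℕ) where
  t : Fin N → Fin N → Option (Fin K)
  symm : ∀ i j, t i j = t j i
  irrefl : ∀ i, t i i = none

/-- `V` is a storage code over `G`: from the coded symbols at the two endpoints of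
any `W_k`-edge, the source symbol `W_k` can be decoded. -/
def IsStorageCode {N K : ℕ} (G : LabeledGraph N K) (S T : Type)
    (V : Fin N → (Fin K → S) → T) : Prop :=
  ∀ i j k, G.t i j = some k →
    ∃ D : T → T → S, ∀ w : Fin K → S, D (V i w) (V j w) = w k

/-- The set of source labels carried by the edges incident to node `i`. -/
def colorSet {N K : ℕ} (G : LabeledGraph N K) (i : Fin N) : Set (Fin K) :=
  {k | ∃ j, G.t i j = some k}

/-- Node `i` is `M`-color: its incident edges carry exactly `M` distinct labels. -/
def IsMColor {N K : ℕ} (G : LabeledGraph N K) (i : Fin N) (M : ℕ) : Prop :=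
  (colorSet G i).ncard = M

/-- if every node is `1`-color, then for every prime `p ≥ N` there is a
storage code with `S = (Fin 2 → ZMod p)` and `T = ZMod p`, i.e. rate `2` is achievable. -/
theorem rate_two_achievable {N K : ℕ} (G : LabeledGraph N K)
    (h1 : ∀ i, IsMColor G i 1)
    (p : ℕ) (hp : p.Prime) (hpN : N ≤ p) :
    ∃ V : Fin N → (Fin K → (Fin 2 → ZMod p)) → ZMod p,
      IsStorageCode G (Fin 2 → ZMod p) (ZMod p) V := by
  haveI : Fact p.Prime := ⟨hp⟩
  classical
  -- each node has a unique color
  have hcs : ∀ i, ∃ k, colorSet G i = {k} := fun i => Set.ncard_eq_one.mp (h1 i)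
  choose c hc using hcs
  refine ⟨fun i w => w (c i) 0 + (i.val : ZMod p) * w (c i) 1, ?_⟩
  intro i j k hij
  have hik : c i = k := by
    have : k ∈ colorSet G i := ⟨j, hij⟩
    rw [hc i] at this; exact this.symm
  have hjk : c j = k := by
    have : k ∈ colorSet G j := ⟨i, (G.symm j i).trans hij⟩
    rw [hc j] at this; exact this.symm
  have hne : i ≠ j := by
    rintro rfl; rw [G.irrefl] at hij; exact nomatch hij
  have hcast : (i.val : ZMod p) - (j.val : ZMod p) ≠ 0 := by
    intro h
    apply hne
    have h' : (i.val : ZMod p) = (j.val : ZMod p) := by linear_combination h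
    have hi := ZMod.val_cast_of_lt (lt_of_lt_of_le i.isLt hpN)
    have hj := ZMod.val_cast_of_lt (lt_of_lt_of_le j.isLt hpN)
    apply Fin.ext
    rw [← hi, ← hj, h']
  set d : ZMod p := (i.val : ZMod p) - (j.val : ZMod p)
  refine ⟨fun a b s => if s = 0 then a - (i.val : ZMod p) * ((a - b) / d) else (a - b) / d, ?_⟩
  intro w
  beta_reduce
  rw [hik, hjk]
  have key : (w k 0 + (i.val : ZMod p) * w k 1 - (w k 0 + (j.val : ZMod p) * w k 1)) / d
      = w k 1 := by
    rw [div_eq_iff hcast]; ring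
  have key2 : ((i.val : ZMod p) * w k 1 - (j.val : ZMod p) * w k 1) / d = w k 1 := by
    rw [div_eq_iff hcast]; ring
  funext s
  fin_cases s <;> simp [key, key2]
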